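/- Let ω : ℝ → ℝ be continuous and let v₁, v₂ : ℝ → ℝ be twice differentiable solutions of y'' + ω(t)²·y = 0 whose Wronskian W = v₁·v₂' − v₁'·v₂ is a nonzero constant. Let A, B, C be real constants satisfying (A·C − B²)·W² = 1. Then on any interval where ρ(t) := √(A·v₁(t)² + 2B·v₁(t)·v₂(t) + C·v₂(t)²) is strictly positive, ρ is twice differentiable and satisfies the Ermakov–Pinney equation ρ'' + ω(t)²·ρ = 1/ρ³. -/

import Mathlib

/-- Pinney's solution of the Ermakov–Pinney equation: for two solutions
`v₁, v₂` of `y'' + ω² y = 0` with constant nonzero Wronskian `W` and constants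
`A, B, C` with `(A C - B²) W² = 1`, wherever
`ρ := √(A v₁² + 2B v₁ v₂ + C v₂²)` is positive, it is twice differentiable and
satisfies `ρ'' + ω² ρ = 1/ρ³`. -/
theorem stmt0 (ω v₁ v₂ : ℝ → ℝ) (hω : Continuous ω)
    (hv₁ : Differentiable ℝ v₁) (hv₁' : Differentiable ℝ (deriv v₁))
    (hv₂ : Differentiable ℝ v₂) (hv₂' : Differentiable ℝ (deriv v₂))
    (heq₁ : ∀ t, deriv (deriv v₁) t + ω t ^ 2 * v₁ t = 0)
    (heq₂ : ∀ t, deriv (deriv v₂) t + ω t ^ 2 * v₂ t = 0)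
    (W : ℝ) (hW : W ≠ 0)
    (hWconst : ∀ t, v₁ t * deriv v₂ t - deriv v₁ t * v₂ t = W)
    (A B C : ℝ) (hABC : (A * C - B ^ 2) * W ^ 2 = 1)
    (ρ : ℝ → ℝ)
    (hρ : ∀ t, ρ t = Real.sqrt (A * v₁ t ^ 2 + 2 * B * v₁ t * v₂ t + C * v₂ t ^ 2)) :
    ∀ t, 0 < ρ t →
      DifferentiableAt ℝ ρ t ∧ DifferentiableAt ℝ (deriv ρ) t ∧
        deriv (deriv ρ) t + ω t ^ 2 * ρ t = 1 / ρ t ^ 3 := by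
  set q : ℝ → ℝ := fun t => A * v₁ t ^ 2 + 2 * B * v₁ t * v₂ t + C * v₂ t ^ 2 with hqdef
  set p : ℝ → ℝ := fun t => A * v₁ t * deriv v₁ t
      + B * (deriv v₁ t * v₂ t + v₁ t * deriv v₂ t) + C * v₂ t * deriv v₂ t with hpdef
  set S : ℝ → ℝ := fun t => A * deriv v₁ t ^ 2 + 2 * B * deriv v₁ t * deriv v₂ t
      + C * deriv v₂ t ^ 2 with hSdef
  have hρfun : ρ = fun t => Real.sqrt (q t) := funext hρ
  have hq : ∀ t, HasDerivAt q (2 * p t) t := by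
    intro t
    have h1 : HasDerivAt v₁ (deriv v₁ t) t := (hv₁ t).hasDerivAt
    have h2 : HasDerivAt v₂ (deriv v₂ t) t := (hv₂ t).hasDerivAt
    have H := (((h1.pow 2).const_mul A).add ((h1.mul h2).const_mul (2*B))).add
      ((h2.pow 2).const_mul C)
    have hfun : q = fun t => A * v₁ t ^ 2 + 2 * B * (v₁ t * v₂ t) + C * v₂ t ^ 2 := by
      funext s; simp only [hqdef]; ring
    rw [hfun]
    refine H.congr_deriv ?_
    simp only [hpdef]; ring
  have hp : ∀ t, HasDerivAt p (S t - ω t ^ 2 * q t) t := by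
    intro t
    have h1 : HasDerivAt v₁ (deriv v₁ t) t := (hv₁ t).hasDerivAt
    have h2 : HasDerivAt v₂ (deriv v₂ t) t := (hv₂ t).hasDerivAt
    have h1' : HasDerivAt (deriv v₁) (deriv (deriv v₁) t) t := (hv₁' t).hasDerivAt
    have h2' : HasDerivAt (deriv v₂) (deriv (deriv v₂) t) t := (hv₂' t).hasDerivAt
    have H := ((((h1.mul h1').const_mul A).add
      (((h1'.mul h2).add (h1.mul h2')).const_mul B)).add ((h2.mul h2').const_mul C))
    have hfun : p = fun t => A * (v₁ t * deriv v₁ t)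
        + B * (deriv v₁ t * v₂ t + v₁ t * deriv v₂ t) + C * (v₂ t * deriv v₂ t) := by
      funext s; simp only [hpdef]; ring
    rw [hfun]
    refine H.congr_deriv ?_
    have e1 : deriv (deriv v₁) t = -(ω t ^ 2 * v₁ t) := by linarith [heq₁ t]
    have e2 : deriv (deriv v₂) t = -(ω t ^ 2 * v₂ t) := by linarith [heq₂ t]
    simp only [hSdef, hqdef, e1, e2]; ring
  have hρd : ∀ t, 0 < q t → HasDerivAt ρ (p t / Real.sqrt (q t)) t := by
    intro t ht
    have hs : Real.sqrt (q t) ≠ 0 := by positivity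
    have H := (Real.hasDerivAt_sqrt (ne_of_gt ht)).comp t (hq t)
    rw [hρfun]
    refine H.congr_deriv ?_
    field_simp
  intro t₀ hρt₀
  have hq0 : 0 < q t₀ := by
    have := hρ t₀
    rw [this] at hρt₀
    exact Real.sqrt_pos.mp hρt₀
  have hqnhds : ∀ᶠ t in nhds t₀, 0 < q t :=
    (hq t₀).continuousAt.eventually (eventually_gt_nhds hq0)
  have hderiv_eq : deriv ρ =ᶠ[nhds t₀] fun t => p t / Real.sqrt (q t) :=
    hqnhds.mono fun t ht => (hρd t ht).deriv
  have hs0 : Real.sqrt (q t₀) ≠ 0 := by positivity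
  have hsq : Real.sqrt (q t₀) ^ 2 = q t₀ := Real.sq_sqrt hq0.le
  have hsqrtd : HasDerivAt (fun t => Real.sqrt (q t)) (p t₀ / Real.sqrt (q t₀)) t₀ := by
    have := hρd t₀ hq0; rwa [hρfun] at this
  have hg : HasDerivAt (fun t => p t / Real.sqrt (q t))
      (((S t₀ - ω t₀ ^ 2 * q t₀) * Real.sqrt (q t₀)
        - p t₀ * (p t₀ / Real.sqrt (q t₀))) / Real.sqrt (q t₀) ^ 2) t₀ :=
    (hp t₀).div hsqrtd hs0
  have hd2 : HasDerivAt (deriv ρ)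
      (((S t₀ - ω t₀ ^ 2 * q t₀) * Real.sqrt (q t₀)
        - p t₀ * (p t₀ / Real.sqrt (q t₀))) / Real.sqrt (q t₀) ^ 2) t₀ :=
    hg.congr_of_eventuallyEq hderiv_eq
  refine ⟨(hρd t₀ hq0).differentiableAt, hd2.differentiableAt, ?_⟩
  have key : q t₀ * S t₀ - p t₀ ^ 2 = 1 := by
    have : q t₀ * S t₀ - p t₀ ^ 2
        = (A * C - B ^ 2) * (v₁ t₀ * deriv v₂ t₀ - deriv v₁ t₀ * v₂ t₀) ^ 2 := by
      simp only [hqdef, hpdef, hSdef]; ring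
    rw [this, hWconst t₀, ← hABC]
  have hρq : ρ t₀ = Real.sqrt (q t₀) := hρ t₀
  rw [hd2.deriv, hρq]
  have hspos : 0 < Real.sqrt (q t₀) := Real.sqrt_pos.mpr hq0
  rw [← hsq] at key ⊢
  have hsq' : Real.sqrt (q t₀) ^ 2
      = A * v₁ t₀ ^ 2 + 2 * B * v₁ t₀ * v₂ t₀ + C * v₂ t₀ ^ 2 := hsq
  rw [Real.sqrt_sq hspos.le]
  field_simp
  linear_combination key
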